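/- Let a monoid V act faithfully on a finite additive commutative monoid H, with the insertion property, and suppose H is aperiodic. Let v : V be such that for every u : V there exists x : V with v * u * x = v (i.e. the right ideal vV is minimal). Then v acts as a constant: v • g = v • h for all g, h : H. -/
import Mathlib


/-- If `V` acts faithfully on a finite aperiodic commutative additive monoid
`H` with the insertion property, and the right ideal `vV` is minimal, then
`v` acts as a constant map. -/
theorem minimal_ideal_constant {V H : Type*} [Monoid V] [AddCommMonoid H]
    [MulAction V H] [FaithfulSMul V H] [Finite H]
    (ins : ∀ h : H, ∃ c : V, ∀ g : H, c • g = g + h)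
    (aper : ∃ k : ℕ, 1 ≤ k ∧ ∀ h : H, (k + 1) • h = k • h)
    (v : V) (hmin : ∀ u : V, ∃ x : V, v * u * x = v) :
    ∀ g h : H, v • g = v • h := by
  obtain ⟨k, hk, haper⟩ := aper
  have : Fintype H := Fintype.ofFinite H
  classical
  set a : H := ∑ x : H, k • x with ha
  have habs : ∀ h : H, a + h = a := by
    intro h
    have h1 : (∑ x ∈ Finset.univ.erase h, k • x) + k • h = a :=
      Finset.sum_erase_add _ _ (Finset.mem_univ h)
    calc a + h = (∑ x ∈ Finset.univ.erase h, k • x) + (k • h + h) := by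
          rw [← h1, add_assoc]
      _ = (∑ x ∈ Finset.univ.erase h, k • x) + (k + 1) • h := by
          rw [succ_nsmul]
      _ = a := by rw [haper, h1]
  obtain ⟨c, hc⟩ := ins a
  obtain ⟨x, hx⟩ := hmin c
  have key : ∀ y : H, v • y = v • a := by
    intro y
    calc v • y = (v * c * x) • y := by rw [hx]
      _ = v • (c • (x • y)) := by rw [mul_smul, mul_smul]
      _ = v • (x • y + a) := by rw [hc]
      _ = v • a := by rw [add_comm, habs]
  intro g h
  rw [key g, key h]
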